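/- Let μ be an uncountable regular cardinal and let S ⊆ {α < μ : cf(α) = ω} be stationary in μ. Then S can be partitioned into μ pairwise disjoint stationary subsets; in particular, there exist μ pairwise disjoint stationary subsets of S. -/

import Mathlib

/-- `C` is closed and unbounded in `μ`. -/
def IsClubIn (C : Set Ordinal) (μ : Ordinal) : Prop :=
  (∀ x ∈ C, x < μ) ∧
  (∀ a < μ, ∃ x ∈ C, a ≤ x) ∧
  (∀ a < μ, Order.IsSuccLimit a → (∀ b < a, ∃ x ∈ C, b ≤ x ∧ x < a) → a ∈ C)

/-- `S` is stationary in `μ`: it meets every club of `μ`. -/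
def IsStationaryIn (S : Set Ordinal) (μ : Ordinal) : Prop :=
  ∀ C : Set Ordinal, IsClubIn C μ → (S ∩ C).Nonempty

namespace SolovayAux

universe u

open Ordinal Set

lemma stat_mono {S T : Set Ordinal.{u}} {ν : Ordinal.{u}} (h : S ⊆ T)
    (hS : IsStationaryIn S ν) : IsStationaryIn T ν :=
  fun C hC => ((hS C hC).imp fun _ ⟨h1, h2⟩ => ⟨h h1, h2⟩)

lemma club_Iio {ν : Ordinal.{u}} (hν : Order.IsSuccLimit ν) : IsClubIn (Set.Iio ν) ν :=
  ⟨fun _ h => h, fun a ha => ⟨a, ha, le_rfl⟩, fun a ha _ _ => ha⟩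

lemma club_Ioi {ν j : Ordinal.{u}} (hν : Order.IsSuccLimit ν) (hj : j < ν) :
    IsClubIn {x | j < x ∧ x < ν} ν := by
  refine ⟨fun x hx => hx.2, fun a ha => ?_, fun a ha hlim h => ?_⟩
  · refine ⟨max a (j + 1), ⟨?_, ?_⟩, le_max_left _ _⟩
    · exact lt_of_lt_of_le (lt_add_one j) (le_max_right _ _)
    · exact max_lt ha (by rw [← Order.succ_eq_add_one]; exact hν.succ_lt hj)
  · obtain ⟨x, hx, _, hxa⟩ := h 0 hlim.pos
    exact ⟨hx.1.trans hxa, ha⟩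

/-- sup of a strictly increasing ω-sequence below `ν`. -/
lemma seq_sup {ν : Ordinal.{u}} (hcof : Cardinal.aleph0 < ν.cof) (f : ℕ → Ordinal)
    (hmono : ∀ n, f n < f (n + 1)) (hlt : ∀ n, f n < ν) :
    ∃ s, s < ν ∧ Order.IsSuccLimit s ∧ (∀ n, f n < s) ∧ (∀ b < s, ∃ n, b < f n) := by
  set s := iSup f with hs
  have hfn : ∀ n, f n < s := fun n => (hmono n).trans_le (Ordinal.le_iSup f (n + 1))
  have hslt : s < ν := Ordinal.iSup_lt_ord_lift (c := ν) (by rw [Cardinal.mk_nat, Cardinal.lift_aleph0]; exact hcof) hlt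
  refine ⟨s, hslt, Ordinal.isSuccLimit_iff.mpr ⟨?_, Order.isSuccPrelimit_of_succ_lt ?_⟩, hfn, fun b hb => Ordinal.lt_iSup_iff.mp hb⟩
  · intro h0
    exact absurd (hfn 0) (by simp [h0])
  · intro a ha
    obtain ⟨n, hn⟩ := Ordinal.lt_iSup_iff.mp ha
    exact lt_of_le_of_lt (Order.succ_le_of_lt hn) (hfn n)

/-- Closure points of an expanding operator. -/
lemma exists_closure_point {ν : Ordinal.{u}} (hcof : Cardinal.aleph0 < ν.cof)
    (Φ : Ordinal → Ordinal) (hΦ : ∀ β < ν, β < Φ β ∧ Φ β < ν)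
    {a : Ordinal} (ha : a < ν) :
    ∃ s, a < s ∧ s < ν ∧ Order.IsSuccLimit s ∧ (∀ n, Φ^[n] a < s) ∧ (∀ b < s, ∃ n, b < Φ^[n] a) := by
  have hlt : ∀ n, Φ^[n] a < ν := by
    intro n
    induction n with
    | zero => exact ha
    | succ n ih => rw [Function.iterate_succ_apply']; exact (hΦ _ ih).2
  have hmono : ∀ n, Φ^[n] a < Φ^[n+1] a := by
    intro n
    rw [Function.iterate_succ_apply']
    exact (hΦ _ (hlt n)).1
  obtain ⟨s, hslt, hlim, hfn, hub⟩ := seq_sup hcof _ hmono hlt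
  exact ⟨s, hfn 0, hslt, hlim, hfn, hub⟩

/-- Countable intersections of clubs are club. -/
lemma club_iInter_nat {ν : Ordinal.{u}} (hν : Order.IsSuccLimit ν) (hcof : Cardinal.aleph0 < ν.cof)
    (C : ℕ → Set Ordinal) (hC : ∀ n, IsClubIn (C n) ν) : IsClubIn (⋂ n, C n) ν := by
  classical
  refine ⟨fun x hx => (hC 0).1 x (Set.mem_iInter.mp hx 0), ?_, ?_⟩
  · -- unbounded
    intro a ha
    have hch : ∀ n : ℕ, ∀ β, β < ν → ∃ x ∈ C n, β ≤ x := fun n β hβ => (hC n).2.1 β hβ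
    let c : ℕ → Ordinal → Ordinal := fun n β =>
      if h : β < ν then (hch n β h).choose else 0
    have hc1 : ∀ n β, β < ν → c n β ∈ C n := by
      intro n β h; simp only [c, dif_pos h]; exact (hch n β h).choose_spec.1
    have hc2 : ∀ n β, β < ν → β ≤ c n β := by
      intro n β h; simp only [c, dif_pos h]; exact (hch n β h).choose_spec.2
    have hc3 : ∀ n β, β < ν → c n β < ν := fun n β h => (hC n).1 _ (hc1 n β h)
    let Φ : Ordinal → Ordinal := fun β => Order.succ (max β (iSup fun n => c n β))
    have hΦ : ∀ β < ν, β < Φ β ∧ Φ β < ν := by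
      intro β hβ
      constructor
      · exact (le_max_left _ _).trans_lt (Order.lt_succ _)
      · refine hν.succ_lt (max_lt hβ ?_)
        exact Ordinal.iSup_lt_ord_lift (c := ν) (by rw [Cardinal.mk_nat, Cardinal.lift_aleph0]; exact hcof)
          (fun n => hc3 n β hβ)
    obtain ⟨s, has, hslt, hlim, hfn, hub⟩ := exists_closure_point hcof Φ hΦ ha
    refine ⟨s, Set.mem_iInter.mpr fun k => ?_, has.le⟩
    refine (hC k).2.2 s hslt hlim ?_
    intro b hb
    obtain ⟨n, hn⟩ := hub b hb
    set β := Φ^[n] a with hβdef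
    have hβν : β < ν := (hfn n).trans hslt
    refine ⟨c k β, hc1 k β hβν, hn.le.trans (hc2 k β hβν), ?_⟩
    calc c k β ≤ max β (iSup fun m => c m β) :=
          le_max_of_le_right (Ordinal.le_iSup (fun m => c m β) k)
      _ < Φ β := Order.lt_succ _
      _ = Φ^[n+1] a := (Function.iterate_succ_apply' Φ n a).symm
      _ < s := hfn (n+1)
  · -- closed
    intro a ha hlim h
    refine Set.mem_iInter.mpr fun n => (hC n).2.2 a ha hlim ?_
    intro b hb
    obtain ⟨x, hx, hbx, hxa⟩ := h b hb
    exact ⟨x, Set.mem_iInter.mp hx n, hbx, hxa⟩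

/-- Diagonal intersections of clubs are club. -/
lemma club_diag {ν : Ordinal.{u}} (hν : Order.IsSuccLimit ν) (hcof : Cardinal.aleph0 < ν.cof)
    (hcard : ∀ β < ν, β.card < ν.cof)
    (C : Ordinal → Set Ordinal) (hC : ∀ γ < ν, IsClubIn (C γ) ν) :
    IsClubIn {a | a < ν ∧ ∀ γ < a, a ∈ C γ} ν := by
  classical
  refine ⟨fun x hx => hx.1, ?_, ?_⟩
  · -- unbounded
    intro a ha
    have hch : ∀ γ, γ < ν → ∀ β, β < ν → ∃ x ∈ C γ, β ≤ x :=
      fun γ hγ β hβ => (hC γ hγ).2.1 β hβ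
    let c : Ordinal → Ordinal → Ordinal := fun γ β =>
      if h : γ < ν ∧ β < ν then (hch γ h.1 β h.2).choose else 0
    have hc1 : ∀ γ β, γ < ν → β < ν → c γ β ∈ C γ := by
      intro γ β h1 h2; simp only [c, dif_pos (And.intro h1 h2)]
      exact (hch γ h1 β h2).choose_spec.1
    have hc2 : ∀ γ β, γ < ν → β < ν → β ≤ c γ β := by
      intro γ β h1 h2; simp only [c, dif_pos (And.intro h1 h2)]
      exact (hch γ h1 β h2).choose_spec.2
    have hc3 : ∀ γ β, γ < ν → β < ν → c γ β < ν :=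
      fun γ β h1 h2 => (hC γ h1).1 _ (hc1 γ β h1 h2)
    let Φ : Ordinal → Ordinal := fun β =>
      Order.succ (max β (Ordinal.bsup.{u,u} β (fun γ _ => c γ β)))
    have hΦ : ∀ β < ν, β < Φ β ∧ Φ β < ν := by
      intro β hβ
      constructor
      · exact (le_max_left _ _).trans_lt (Order.lt_succ _)
      · refine hν.succ_lt (max_lt hβ ?_)
        exact Ordinal.bsup_lt_ord (hcard β hβ)
          (fun γ hγ => hc3 γ β (hγ.trans hβ) hβ)
    obtain ⟨s, has, hslt, hlim, hfn, hub⟩ := exists_closure_point hcof Φ hΦ ha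
    refine ⟨s, ⟨hslt, fun γ hγ => ?_⟩, has.le⟩
    have hγν : γ < ν := hγ.trans hslt
    refine (hC γ hγν).2.2 s hslt hlim ?_
    intro b hb
    obtain ⟨n, hn⟩ := hub (max γ b) (max_lt hγ hb)
    set β := Φ^[n] a with hβdef
    have hβν : β < ν := (hfn n).trans hslt
    have hγβ : γ < β := (le_max_left γ b).trans_lt hn
    refine ⟨c γ β, hc1 γ β hγν hβν,
      ((le_max_right γ b).trans_lt hn).le.trans (hc2 γ β hγν hβν), ?_⟩
    calc c γ β ≤ max β (Ordinal.bsup.{u,u} β (fun δ _ => c δ β)) :=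
          le_max_of_le_right (Ordinal.le_bsup _ γ hγβ)
      _ < Φ β := Order.lt_succ _
      _ = Φ^[n+1] a := (Function.iterate_succ_apply' Φ n a).symm
      _ < s := hfn (n+1)
  · -- closed
    intro a ha hlim h
    refine ⟨ha, fun γ hγ => ?_⟩
    refine (hC γ (hγ.trans ha)).2.2 a ha hlim ?_
    intro b hb
    obtain ⟨x, hx, hbx, hxa⟩ := h (max b (Order.succ γ)) (max_lt hb (hlim.succ_lt hγ))
    exact ⟨x, hx.2 γ ((Order.succ_le_iff.mp ((le_max_right _ _).trans hbx))),
      (le_max_left _ _).trans hbx, hxa⟩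

/-- Fodor's lemma. -/
lemma fodor {ν : Ordinal.{u}} (hν : Order.IsSuccLimit ν) (hcof : Cardinal.aleph0 < ν.cof)
    (hcard : ∀ β < ν, β.card < ν.cof)
    (S : Set Ordinal) (hSsub : ∀ α ∈ S, α < ν) (hS : IsStationaryIn S ν)
    (g : Ordinal → Ordinal) (hg : ∀ α ∈ S, g α < α) :
    ∃ γ, γ < ν ∧ IsStationaryIn {α | α ∈ S ∧ g α = γ} ν := by
  classical
  by_contra hcon
  push_neg at hcon
  have hns : ∀ γ, ∃ D, IsClubIn D ν ∧ ({α | α ∈ S ∧ g α = γ} ∩ D) = ∅ := by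
    intro γ
    by_cases hγ : γ < ν
    · have := hcon γ hγ
      simp only [IsStationaryIn, not_forall] at this
      obtain ⟨D, hD, hne⟩ := this
      exact ⟨D, hD, Set.not_nonempty_iff_eq_empty.mp hne⟩
    · refine ⟨Set.Iio ν, club_Iio hν, ?_⟩
      ext α
      simp only [Set.mem_inter_iff, Set.mem_setOf_eq, Set.mem_empty_iff_false, iff_false]
      rintro ⟨⟨hαS, hgα⟩, _⟩
      exact hγ (hgα ▸ ((hg α hαS).trans (hSsub α hαS)))
  choose D hD hdisj using hns
  have hclub : IsClubIn {a | a < ν ∧ ∀ γ < a, a ∈ D γ} ν :=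
    club_diag hν hcof hcard D (fun γ _ => hD γ)
  obtain ⟨α, hαS, hαΔ⟩ := hS _ hclub
  have hgα : g α < α := hg α hαS
  have : α ∈ {β | β ∈ S ∧ g β = g α} ∩ D (g α) := ⟨⟨hαS, rfl⟩, hαΔ.2 (g α) hgα⟩
  rw [hdisj (g α)] at this
  exact this

/-- Recursive enumeration of a set of ordinals. -/
noncomputable def enumOf (G : Set Ordinal.{u}) (i : Ordinal.{u}) : Ordinal :=
  sInf {γ | γ ∈ G ∧ ∀ j (_ : j < i), enumOf G j < γ}
termination_by i

lemma enumOf_spec {ν : Ordinal.{u}} (hν : Order.IsSuccLimit ν) (hcard : ∀ β < ν, β.card < ν.cof)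
    (G : Set Ordinal) (hGsub : ∀ γ ∈ G, γ < ν) (hub : ∀ i < ν, ∃ γ ∈ G, i ≤ γ) :
    ∀ i < ν, enumOf G i ∈ G ∧ (∀ j < i, enumOf G j < enumOf G i) := by
  intro i
  induction i using Ordinal.induction with
  | h i IH =>
    intro hi
    have hblt : Ordinal.bsup.{u,u} i (fun j hj => enumOf G j) < ν :=
      Ordinal.bsup_lt_ord (hcard i hi)
        (fun j hj => hGsub _ ((IH j hj (hj.trans hi)).1))
    have hbν : Order.succ (Ordinal.bsup.{u,u} i (fun j _ => enumOf G j)) < ν := hν.succ_lt hblt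
    obtain ⟨γ, hγG, hγge⟩ := hub _ hbν
    have hne : {δ | δ ∈ G ∧ ∀ j (_ : j < i), enumOf G j < δ}.Nonempty := by
      refine ⟨γ, hγG, fun j hj => ?_⟩
      exact lt_of_le_of_lt (Ordinal.le_bsup (fun j _ => enumOf G j) j hj)
        (lt_of_lt_of_le (Order.lt_succ _) hγge)
    have hmem := csInf_mem hne
    rw [enumOf]
    exact ⟨hmem.1, fun j hj => hmem.2 j hj⟩

end SolovayAux

open SolovayAux in
/-- **Solovay's splitting theorem.** Let `μ` be an uncountable regular cardinal and let
`S ⊆ {α < μ : cf α = ω}` be stationary in `μ`. Then `S` can be partitioned into `μ`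
pairwise disjoint stationary subsets. -/
theorem solovay_splitting (μ : Cardinal) (hreg : μ.IsRegular)
    (hunc : Cardinal.aleph0 < μ)
    (S : Set Ordinal)
    (hSsub : ∀ α ∈ S, α < μ.ord ∧ Ordinal.cof α = Cardinal.aleph0)
    (hstat : IsStationaryIn S μ.ord) :
    ∃ T : Ordinal → Set Ordinal,
      (∀ i < μ.ord, T i ⊆ S ∧ IsStationaryIn (T i) μ.ord) ∧
      (∀ i < μ.ord, ∀ j < μ.ord, i ≠ j → Disjoint (T i) (T j)) ∧
      (⋃ i ∈ Set.Iio μ.ord, T i) = S := by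
  classical
  set ν := μ.ord with hνdef
  have hν : Order.IsSuccLimit ν := Cardinal.isSuccLimit_ord hunc.le
  have hcofeq : ν.cof = μ := hreg.cof_eq
  have hcof : Cardinal.aleph0 < ν.cof := by rw [hcofeq]; exact hunc
  have hcard : ∀ β < ν, β.card < ν.cof := by
    intro β hβ; rw [hcofeq]; exact Cardinal.lt_ord.mp hβ
  have hSsubν : ∀ α ∈ S, α < ν := fun α h => (hSsub α h).1
  -- ladders
  have hladder : ∀ α ∈ S, ∃ L : ℕ → Ordinal,
      (∀ n, L n < α) ∧ (∀ b < α, ∃ n, b ≤ L n) := by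
    intro α hα
    obtain ⟨ι, f, hlsub, hmk⟩ := Ordinal.exists_lsub_cof α
    rw [(hSsub α hα).2] at hmk
    obtain ⟨d⟩ := Cardinal.denumerable_iff.mpr hmk
    let e := @Denumerable.eqv ι d
    refine ⟨fun n => f (e.symm n), fun n => ?_, fun b hb => ?_⟩
    · rw [← hlsub]; exact Ordinal.lt_lsub f _
    · rw [← hlsub] at hb
      obtain ⟨i, hi⟩ := Ordinal.lt_lsub_iff.mp hb
      exact ⟨e i, by simpa [e] using hi⟩
  set F : Ordinal → ℕ → Ordinal :=
    (fun α => if h : α ∈ S then (hladder α h).choose else fun _ => 0) with hFdef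
  have hF1 : ∀ α, α ∈ S → ∀ n, F α n < α := by
    intro α h n; simp only [hFdef, dif_pos h]; exact (hladder α h).choose_spec.1 n
  have hF2 : ∀ α, α ∈ S → ∀ b < α, ∃ n, b ≤ F α n := by
    intro α h; simp only [hFdef, dif_pos h]; exact (hladder α h).choose_spec.2
  -- find a good ladder level n₀
  have hkey : ∃ n : ℕ, ∀ i < ν, IsStationaryIn {α | α ∈ S ∧ i ≤ F α n} ν := by
    by_contra hcon
    push_neg at hcon
    have hcon' : ∀ n : ℕ, ∃ i, i < ν ∧ ∃ D, IsClubIn D ν ∧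
        ({α | α ∈ S ∧ i ≤ F α n} ∩ D) = ∅ := by
      intro n
      obtain ⟨i, hi, hns⟩ := hcon n
      simp only [IsStationaryIn, not_forall] at hns
      obtain ⟨D, hD, hne⟩ := hns
      exact ⟨i, hi, D, hD, Set.not_nonempty_iff_eq_empty.mp hne⟩
    choose iseq hilt D hD hdisj using hcon'
    have hj : iSup iseq < ν :=
      Ordinal.iSup_lt_ord_lift (c := ν) (by rw [Cardinal.mk_nat, Cardinal.lift_aleph0]; exact hcof) hilt
    set j := iSup iseq with hjdef
    set E : ℕ → Set Ordinal := fun n => Nat.casesOn n {x | j < x ∧ x < ν} D with hEdef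
    have hE : ∀ n, IsClubIn (E n) ν := by
      intro n
      cases n with
      | zero => exact club_Ioi hν hj
      | succ m => exact hD m
    obtain ⟨α, hαS, hαE⟩ := hstat _ (club_iInter_nat hν hcof E hE)
    have hα0 : j < α := (Set.mem_iInter.mp hαE 0).1
    obtain ⟨n, hn⟩ := hF2 α hαS j hα0
    have hαD : α ∈ D n := Set.mem_iInter.mp hαE (n + 1)
    have hmem : α ∈ {β | β ∈ S ∧ iseq n ≤ F β n} ∩ D n :=
      ⟨⟨hαS, (Ordinal.le_iSup iseq n).trans hn⟩, hαD⟩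
    rw [hdisj n] at hmem
    exact hmem
  obtain ⟨n₀, hn₀⟩ := hkey
  set g : Ordinal → Ordinal := fun α => F α n₀ with hgdef
  have hgreg : ∀ α ∈ S, g α < α := fun α h => hF1 α h n₀
  set G : Set Ordinal := {γ | IsStationaryIn {α | α ∈ S ∧ g α = γ} ν} with hGdef
  have hGsub : ∀ γ ∈ G, γ < ν := by
    intro γ hγ
    obtain ⟨α, hα, hαlt⟩ := hγ _ (club_Iio hν)
    exact hα.2 ▸ ((hgreg α hα.1).trans hαlt)
  have hGub : ∀ i < ν, ∃ γ ∈ G, i ≤ γ := by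
    intro i hi
    have hstatSi := hn₀ i hi
    obtain ⟨γ, hγν, hγstat⟩ := fodor hν hcof hcard _ (fun α h => hSsubν α h.1)
      hstatSi g (fun α h => hgreg α h.1)
    refine ⟨γ, ?_, ?_⟩
    · exact stat_mono (fun α h => ⟨h.1.1, h.2⟩) hγstat
    · obtain ⟨α, hα, _⟩ := hγstat _ (club_Iio hν)
      exact hα.2 ▸ hα.1.2
  set e : Ordinal → Ordinal := enumOf G with hedef
  have hespec := enumOf_spec hν hcard G hGsub hGub
  have heG : ∀ i < ν, IsStationaryIn {α | α ∈ S ∧ g α = e i} ν :=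
    fun i hi => (hespec i hi).1
  have hemono : ∀ i, i < ν → ∀ j, j < i → e j < e i :=
    fun i hi j hj => (hespec i hi).2 j hj
  refine ⟨fun i => if i = 0 then {α | α ∈ S ∧ ∀ j, 0 < j → j < ν → g α ≠ e j}
      else {α | α ∈ S ∧ g α = e i}, ?_, ?_, ?_⟩
  · intro i hi
    by_cases h0 : i = 0
    · subst h0
      simp only [if_pos rfl]
      refine ⟨fun α h => h.1, ?_⟩
      refine stat_mono ?_ (heG 0 hν.pos)
      intro α hα
      refine ⟨hα.1, fun j hj0 hjν hne => ?_⟩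
      have : e 0 = e j := hα.2 ▸ hne
      exact absurd this (ne_of_lt (hemono j hjν 0 hj0))
    · simp only [if_neg h0]
      exact ⟨fun α h => h.1, heG i hi⟩
  · intro i hi j hj hij
    rw [Set.disjoint_left]
    intro α hαi hαj
    by_cases h0i : i = 0 <;> by_cases h0j : j = 0
    · exact hij (h0i.trans h0j.symm)
    · subst h0i
      simp only [if_pos rfl] at hαi
      simp only [if_neg h0j] at hαj
      exact hαi.2 j (pos_iff_ne_zero.mpr h0j) hj hαj.2
    · subst h0j
      simp only [if_pos rfl] at hαj
      simp only [if_neg h0i] at hαi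
      exact hαj.2 i (pos_iff_ne_zero.mpr h0i) hi hαi.2
    · simp only [if_neg h0i] at hαi
      simp only [if_neg h0j] at hαj
      have heq : e i = e j := hαi.2.symm.trans hαj.2
      rcases lt_trichotomy i j with h | h | h
      · exact absurd heq (ne_of_lt (hemono j hj i h))
      · exact hij h
      · exact absurd heq.symm (ne_of_lt (hemono i hi j h))
  · ext α
    simp only [Set.mem_iUnion, Set.mem_Iio]
    constructor
    · rintro ⟨i, hi, hα⟩
      by_cases h0 : i = 0
      · rw [if_pos h0] at hα; exact hα.1
      · rw [if_neg h0] at hα; exact hα.1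
    · intro hα
      by_cases h : ∃ j, 0 < j ∧ j < ν ∧ g α = e j
      · obtain ⟨j, hj0, hjν, hgj⟩ := h
        refine ⟨j, hjν, ?_⟩
        rw [if_neg (ne_of_gt hj0)]
        exact ⟨hα, hgj⟩
      · push_neg at h
        refine ⟨0, hν.pos, ?_⟩
        rw [if_pos rfl]
        exact ⟨hα, fun j hj0 hjν => h j hj0 hjν⟩
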